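/- Let f(z) = az and g(z) = cz + d with 0 < c < 1 < a, d > 0, and suppose a^n c^m ≠ 1 for all positive integers m, n (i.e., log a / log(1/c) is irrational or the multiplicative semigroup generated by a and c misses 1). Then the set {a^n c^m : m, n ∈ ℕ} accumulates at every point of (0,1); consequently, for every λ ∈ (0,1) there are sequences m_k, n_k with g^{m_k} ∘ f^{n_k} converging to the map z ↦ λz + d/(1−c), whose fixed point d/((1−c)(1−λ)) lies in the forward limit set of ⟨f,g⟩. -/

import Mathlib

open Filter Topology OnePoint


lemma toNatCastR (z : ℤ) (hz : 0 ≤ z) : ((z.toNat : ℕ) : ℝ) = (z : ℝ) := by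
  exact_mod_cast congrArg (fun t : ℤ => (t : ℝ)) (Int.toNat_of_nonneg hz)

lemma step_lemma (γ t s ε : ℝ) (hγ : 0 < γ) (hγε : γ < ε) (hs : s ≤ t - ε) :
    ∃ j : ℕ, 1 ≤ j ∧ t - ε < s + j * γ ∧ s + j * γ < t + ε := by
  set x := (t - ε - s) / γ with hxdef
  have hx : 0 ≤ x := div_nonneg (by linarith) hγ.le
  have h1 : x < (⌊x⌋₊ : ℝ) + 1 := Nat.lt_floor_add_one x
  have h2 : (⌊x⌋₊ : ℝ) ≤ x := Nat.floor_le hx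
  have hxγ : x * γ = t - ε - s := div_mul_cancel₀ _ hγ.ne'
  refine ⟨⌊x⌋₊ + 1, le_add_self, ?_, ?_⟩ <;> push_cast <;> nlinarith

lemma exists_small (α β : ℝ) (hα : 0 < α) (hβ : 0 < β)
    (h : ∀ m n : ℕ, 0 < m → 0 < n → (n : ℝ) * α ≠ (m : ℝ) * β)
    (δ : ℝ) (hδ : 0 < δ) :
    ∃ n m : ℕ, 1 ≤ n ∧ 1 ≤ m ∧ (n : ℝ) * α - m * β ≠ 0 ∧ |(n : ℝ) * α - m * β| < δ := by
  set G := AddSubgroup.closure ({α, -β} : Set ℝ) with hG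
  rcases G.dense_or_cyclic with hd | ⟨g, hg⟩
  · -- dense case
    set δ' := min δ (min α β) with hδ'
    have hδ'0 : 0 < δ' := lt_min hδ (lt_min hα hβ)
    obtain ⟨y, hyG, hy⟩ := hd.exists_mem_open isOpen_Ioo (Set.nonempty_Ioo.2 hδ'0)
    obtain ⟨pz, qz, hpq⟩ := AddSubgroup.mem_closure_pair.1 hyG
    have hy0 : 0 < y := hy.1
    have hyδ : y < δ' := hy.2
    have hyeq : (pz : ℝ) * α - (qz : ℝ) * β = y := by
      rw [← hpq]; push_cast [zsmul_eq_mul]; ring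
    have hδα : δ' ≤ α := le_trans (min_le_right _ _) (min_le_left _ _)
    have hδβ : δ' ≤ β := le_trans (min_le_right _ _) (min_le_right _ _)
    have hδδ : δ' ≤ δ := min_le_left _ _
    rcases le_or_gt pz 0 with hp | hp
    · rcases le_or_gt qz 0 with hq | hq
      · have hpR : (pz : ℝ) ≤ 0 := by exact_mod_cast hp
        have hqR : (qz : ℝ) ≤ 0 := by exact_mod_cast hq
        have hq1 : qz ≤ -1 := by
          by_contra hcon
          have : qz = 0 := by omega
          have hq0R : (qz : ℝ) = 0 := by exact_mod_cast this
          nlinarith [hyeq]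
        have hq1R : (qz : ℝ) ≤ -1 := by exact_mod_cast hq1
        have hp1 : pz ≤ -1 := by
          by_contra hcon
          have : pz = 0 := by omega
          have hp0R : (pz : ℝ) = 0 := by exact_mod_cast this
          nlinarith [hyeq]
        have hp1R : (pz : ℝ) ≤ -1 := by exact_mod_cast hp1
        have hc1 : (((-pz).toNat : ℕ) : ℝ) = -(pz : ℝ) := by
          rw [toNatCastR _ (by omega)]; push_cast; ring
        have hc2 : (((-qz).toNat : ℕ) : ℝ) = -(qz : ℝ) := by
          rw [toNatCastR _ (by omega)]; push_cast; ring
        refine ⟨(-pz).toNat, (-qz).toNat, by omega, by omega, ?_, ?_⟩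
        · rw [hc1, hc2]; intro hcon; nlinarith
        · rw [hc1, hc2, abs_lt]; constructor <;> nlinarith
      · exfalso
        have hpR : (pz : ℝ) ≤ 0 := by exact_mod_cast hp
        have hqR : (1 : ℝ) ≤ (qz : ℝ) := by exact_mod_cast hq
        nlinarith [hyeq]
    · rcases le_or_gt qz 0 with hq | hq
      · exfalso
        have hpR : (1 : ℝ) ≤ (pz : ℝ) := by exact_mod_cast hp
        have hqR : (qz : ℝ) ≤ 0 := by exact_mod_cast hq
        nlinarith [hyeq]
      · have hc1 : ((pz.toNat : ℕ) : ℝ) = (pz : ℝ) := toNatCastR _ (by omega)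
        have hc2 : ((qz.toNat : ℕ) : ℝ) = (qz : ℝ) := toNatCastR _ (by omega)
        refine ⟨pz.toNat, qz.toNat, by omega, by omega, ?_, ?_⟩
        · rw [hc1, hc2, hyeq]; exact hy0.ne'
        · rw [hc1, hc2, hyeq, abs_lt]; constructor <;> nlinarith
  · -- cyclic case: contradiction
    exfalso
    have hαG : α ∈ G := AddSubgroup.subset_closure (by simp)
    have hβG : -β ∈ G := AddSubgroup.subset_closure (by simp)
    rw [hg] at hαG hβG
    obtain ⟨p, hp⟩ := AddSubgroup.mem_closure_singleton.1 hαG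
    obtain ⟨q, hq⟩ := AddSubgroup.mem_closure_singleton.1 hβG
    have hg0 : g ≠ 0 := by
      rintro rfl; simp at hp; exact hα.ne' hp.symm
    have key : (q : ℝ) * α = -((p : ℝ) * β) := by
      have h1 : (q : ℝ) * ((p : ℝ) * g) = (q : ℝ) * α := by
        rw [← hp]; push_cast [zsmul_eq_mul]; ring
      have h2 : (p : ℝ) * ((q : ℝ) * g) = (p : ℝ) * (-β) := by
        rw [← hq]; push_cast [zsmul_eq_mul]; ring
      nlinarith [h1, h2]
    have hp0 : p ≠ 0 := by
      rintro rfl; simp [zsmul_eq_mul] at hp; exact hα.ne' hp.symm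
    have hq0 : q ≠ 0 := by
      rintro rfl
      have h1 : (p : ℝ) * β = 0 := by push_cast at key; linarith
      rcases mul_eq_zero.1 h1 with h2 | h2
      · exact hp0 (by exact_mod_cast h2)
      · exact hβ.ne' h2
    rcases lt_or_gt_of_ne hq0 with hqneg | hqpos
    · have hqR : (q : ℝ) ≤ -1 := by exact_mod_cast (by omega : q ≤ -1)
      have hppos : 0 < p := by
        by_contra hcon
        push_neg at hcon
        have hpR : (p : ℝ) ≤ 0 := by exact_mod_cast hcon
        nlinarith [key]
      have hc1 : ((p.toNat : ℕ) : ℝ) = (p : ℝ) := toNatCastR _ (by omega)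
      have hc2 : (((-q).toNat : ℕ) : ℝ) = -(q : ℝ) := by
        rw [toNatCastR _ (by omega)]; push_cast; ring
      refine h p.toNat (-q).toNat (by omega) (by omega) ?_
      rw [hc1, hc2]; linarith [key]
    · have hqR : (1 : ℝ) ≤ (q : ℝ) := by exact_mod_cast hqpos
      have hpneg : p < 0 := by
        by_contra hcon
        push_neg at hcon
        have hpR : (0 : ℝ) ≤ (p : ℝ) := by exact_mod_cast hcon
        nlinarith [key]
      have hc1 : (((-p).toNat : ℕ) : ℝ) = -(p : ℝ) := by
        rw [toNatCastR _ (by omega)]; push_cast; ring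
      have hc2 : ((q.toNat : ℕ) : ℝ) = (q : ℝ) := toNatCastR _ (by omega)
      refine h (-p).toNat q.toNat (by omega) (by omega) ?_
      rw [hc1, hc2]; linarith [key]

lemma semigroup_dense (α β : ℝ) (hα : 0 < α) (hβ : 0 < β)
    (h : ∀ m n : ℕ, 0 < m → 0 < n → (n : ℝ) * α ≠ (m : ℝ) * β)
    (t ε : ℝ) (hε : 0 < ε) (M : ℕ) :
    ∃ n m : ℕ, 1 ≤ n ∧ M ≤ m ∧ |(n : ℝ) * α - m * β - t| < ε := by
  obtain ⟨n₀, m₀, hn₀, hm₀, hne, habs⟩ := exists_small α β hα hβ h ε hε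
  set γ := (n₀ : ℝ) * α - m₀ * β with hγdef
  rcases hne.lt_or_gt with hneg | hpos
  · -- γ < 0 : step downward from above
    have hγ' : 0 < -γ := by linarith
    have hγε : -γ < ε := by rw [abs_lt] at habs; linarith [habs.1]
    set N := ⌈(t + ε + M * β) / α⌉₊ with hN
    have hNα : t + ε + M * β ≤ N * α := by
      rw [hN]
      have := Nat.le_ceil ((t + ε + M * β) / α)
      calc t + ε + M * β = ((t + ε + M * β) / α) * α := by field_simp
        _ ≤ (⌈(t + ε + M * β) / α⌉₊ : ℝ) * α := by
            apply mul_le_mul_of_nonneg_right this hα.le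
    have hs : -((N : ℝ) * α - M * β) ≤ -t - ε := by linarith
    obtain ⟨j, hj1, hj2, hj3⟩ := step_lemma (-γ) (-t) (-((N : ℝ) * α - M * β)) ε hγ' hγε hs
    have hjn : 0 < j * n₀ := Nat.mul_pos hj1 hn₀
    refine ⟨N + j * n₀, M + j * m₀, by omega, by omega, ?_⟩
    rw [abs_lt]
    push_cast
    constructor <;> nlinarith [hj2, hj3]
  · -- γ > 0 : step upward from below
    have hγε : γ < ε := by rw [abs_lt] at habs; linarith [habs.2]
    set L := max M ⌈((n₀ : ℝ) * α - t + ε) / β⌉₊ with hL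
    have hLβ : (n₀ : ℝ) * α - t + ε ≤ L * β := by
      have h1 := Nat.le_ceil (((n₀ : ℝ) * α - t + ε) / β)
      have h2 : (⌈((n₀ : ℝ) * α - t + ε) / β⌉₊ : ℝ) ≤ L := by
        exact_mod_cast Nat.cast_le.2 (le_max_right _ _)
      calc (n₀ : ℝ) * α - t + ε = (((n₀ : ℝ) * α - t + ε) / β) * β := by field_simp
        _ ≤ (L : ℝ) * β := mul_le_mul_of_nonneg_right (h1.trans h2) hβ.le
    have hs : (n₀ : ℝ) * α - L * β ≤ t - ε := by linarith
    obtain ⟨j, hj1, hj2, hj3⟩ := step_lemma γ t ((n₀ : ℝ) * α - L * β) ε hpos hγε hs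
    have hML : M ≤ L := le_max_left _ _
    refine ⟨n₀ + j * n₀, L + j * m₀, by omega, by omega, ?_⟩
    rw [abs_lt]
    push_cast
    constructor <;> nlinarith [hj2, hj3]

lemma key_approx (a c : ℝ) (hc : 0 < c) (hc1 : c < 1) (ha : 1 < a)
    (hno1 : ∀ m n : ℕ, 0 < m → 0 < n → a ^ n * c ^ m ≠ 1)
    (x : ℝ) (hx0 : 0 < x) (ε : ℝ) (hε : 0 < ε) (M : ℕ) :
    ∃ m n : ℕ, M ≤ m ∧ 1 ≤ n ∧ |a ^ n * c ^ m - x| < ε := by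
  have ha0 : (0 : ℝ) < a := lt_trans one_pos ha
  set α := Real.log a with hαdef
  set β := -Real.log c with hβdef
  have hα : 0 < α := Real.log_pos ha
  have hβ : 0 < β := by
    have := Real.log_neg hc hc1
    simp [hβdef]; linarith
  have hpowlog : ∀ n m : ℕ, a ^ n * c ^ m = Real.exp ((n : ℝ) * α - m * β) := by
    intro n m
    have h1 : (0 : ℝ) < a ^ n * c ^ m := by positivity
    rw [← Real.exp_log h1, Real.log_mul (by positivity) (by positivity),
      Real.log_pow, Real.log_pow]
    congr 1
    simp only [hαdef, hβdef]
    ring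
  have hrel : ∀ m n : ℕ, 0 < m → 0 < n → (n : ℝ) * α ≠ (m : ℝ) * β := by
    intro m n hm hn hcon
    apply hno1 m n hm hn
    rw [hpowlog n m]
    rw [show (n : ℝ) * α - m * β = 0 by linarith]
    exact Real.exp_zero
  -- continuity of exp at log x
  have hcont : ContinuousAt Real.exp (Real.log x) := Real.continuous_exp.continuousAt
  rw [Metric.continuousAt_iff] at hcont
  obtain ⟨δ, hδ0, hδ⟩ := hcont ε hε
  obtain ⟨n, m, hn, hm, habs⟩ := semigroup_dense α β hα hβ hrel (Real.log x) δ hδ0 M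
  refine ⟨m, n, hm, hn, ?_⟩
  have h2 : dist ((n : ℝ) * α - m * β) (Real.log x) < δ := by
    rw [Real.dist_eq]; exact habs
  have h3 := hδ h2
  rw [Real.exp_log hx0, Real.dist_eq] at h3
  rw [hpowlog n m]
  exact h3

lemma affine_iter (A B : ℂ) (hA : A ≠ 1) (h : ℂ → ℂ) (hh : ∀ z, h z = A * z + B) :
    ∀ j z, h^[j] z = A ^ j * z + B * (1 - A ^ j) / (1 - A) := by
  have hA1 : (1 : ℂ) - A ≠ 0 := sub_ne_zero.2 (Ne.symm hA)
  intro j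
  induction j with
  | zero => intro z; simp
  | succ j ih =>
    intro z
    rw [Function.iterate_succ_apply', ih, hh]
    field_simp
    ring

/-- Let `f(z) = az`, `g(z) = cz + d` with `0 < c < 1 < a`, `d > 0`, and suppose
`aⁿ cᵐ ≠ 1` for all positive integers `m, n`. Then `{aⁿ cᵐ}` accumulates at every point of
`(0, 1)`; consequently, for every `λ ∈ (0, 1)` there are sequences `m_k, n_k` such that
`g^{m_k} ∘ f^{n_k}` converges to the map `z ↦ λ z + d/(1-c)`, whose fixed point
`d/((1-c)(1-λ))` lies in the forward limit set of `⟨f, g⟩`. -/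
theorem accumulation_and_limit_set_points
    (a c d : ℝ) (hc : 0 < c) (hc1 : c < 1) (ha : 1 < a) (hd : 0 < d)
    (hno1 : ∀ m n : ℕ, 0 < m → 0 < n → a ^ n * c ^ m ≠ 1)
    (f g : Function.End ℂ)
    (hf : ∀ z, f z = (a : ℂ) * z) (hg : ∀ z, g z = (c : ℂ) * z + (d : ℂ)) :
    (∀ x ∈ Set.Ioo (0 : ℝ) 1, ∀ ε > (0 : ℝ), ∃ m n : ℕ, |a ^ n * c ^ m - x| < ε) ∧
    ∀ lam ∈ Set.Ioo (0 : ℝ) 1, ∃ mk nk : ℕ → ℕ,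
      Tendsto (fun k => a ^ (nk k) * c ^ (mk k)) atTop (𝓝 lam) ∧
      Tendsto (fun k => c ^ (mk k)) atTop (𝓝 0) ∧
      (∀ z : ℂ, Tendsto (fun k => g^[mk k] (f^[nk k] z)) atTop
        (𝓝 ((lam : ℂ) * z + ((d / (1 - c) : ℝ) : ℂ)))) ∧
      (((d / ((1 - c) * (1 - lam)) : ℝ) : ℂ) : OnePoint ℂ) ∈
        {p : OnePoint ℂ | AccPt p (𝓟 ((fun h : Function.End ℂ =>
          ((h Complex.I : ℂ) : OnePoint ℂ)) ''
            (Subsemigroup.closure ({f, g} : Set (Function.End ℂ)) : Set (Function.End ℂ))))} := by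
  have ha0 : (0 : ℝ) < a := lt_trans one_pos ha
  constructor
  · intro x hx ε hε
    obtain ⟨m, n, _, _, habs⟩ := key_approx a c hc hc1 ha hno1 x hx.1 ε hε 0
    exact ⟨m, n, habs⟩
  intro lam hlam
  obtain ⟨hlam0, hlam1⟩ := hlam
  -- choose sequences
  have H : ∀ k : ℕ, ∃ m n : ℕ, max k 1 ≤ m ∧ 1 ≤ n ∧
      |a ^ n * c ^ m - lam| < 1 / (k + 1) :=
    fun k => key_approx a c hc hc1 ha hno1 lam hlam0 (1 / (k + 1)) (by positivity) (max k 1)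
  choose mk nk hm hn hdist using H
  have hmk : ∀ k, k ≤ mk k := fun k => le_trans (le_max_left _ _) (hm k)
  have hmk1 : ∀ k, 1 ≤ mk k := fun k => le_trans (le_max_right _ _) (hm k)
  set r : ℕ → ℝ := fun k => a ^ (nk k) * c ^ (mk k) with hrdef
  have hr0 : ∀ k, 0 < r k := fun k => mul_pos (pow_pos ha0 _) (pow_pos hc _)
  have hr1 : ∀ k, r k ≠ 1 := fun k => hno1 (mk k) (nk k) (hmk1 k) (hn k)
  -- T1
  have T1 : Tendsto r atTop (𝓝 lam) := by
    rw [tendsto_iff_dist_tendsto_zero]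
    apply squeeze_zero (fun k => dist_nonneg) (fun k => (Real.dist_eq _ _ ▸ (hdist k).le))
    exact tendsto_one_div_add_atTop_nhds_zero_nat
  -- T2
  have T2 : Tendsto (fun k => c ^ (mk k)) atTop (𝓝 0) := by
    apply (tendsto_pow_atTop_nhds_zero_of_lt_one hc.le hc1).comp
    exact tendsto_atTop_mono hmk tendsto_id
  -- iterate formulas
  have hcc1 : (c : ℂ) ≠ 1 := by
    simpa using fun hcon => absurd hcon hc1.ne
  have hfi : ∀ n (z : ℂ), f^[n] z = (a : ℂ) ^ n * z := by
    intro n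
    induction n with
    | zero => intro z; show z = _; simp
    | succ n ih => intro z; show f^[n] (f z) = _; rw [ih, hf]; ring
  have hgi : ∀ m (z : ℂ), g^[m] z =
      (c : ℂ) ^ m * z + (d : ℂ) * (1 - (c : ℂ) ^ m) / (1 - (c : ℂ)) :=
    affine_iter (c : ℂ) (d : ℂ) hcc1 g hg
  have hcomp : ∀ k (z : ℂ), g^[mk k] (f^[nk k] z) =
      ((r k : ℝ) : ℂ) * z + ((d * (1 - c ^ (mk k)) / (1 - c) : ℝ) : ℂ) := by
    intro k z
    rw [hfi, hgi]
    simp only [hrdef]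
    push_cast
    ring
  -- T3
  have Breal : Tendsto (fun k => d * (1 - c ^ (mk k)) / (1 - c)) atTop (𝓝 (d / (1 - c))) := by
    have h0 : d * (1 - (0 : ℝ)) / (1 - c) = d / (1 - c) := by ring
    exact h0 ▸ ((tendsto_const_nhds.sub T2).const_mul d).div_const (1 - c)
  have T1C : Tendsto (fun k => ((r k : ℝ) : ℂ)) atTop (𝓝 ((lam : ℝ) : ℂ)) :=
    (Complex.continuous_ofReal.tendsto lam).comp T1
  have BC : Tendsto (fun k => ((d * (1 - c ^ (mk k)) / (1 - c) : ℝ) : ℂ)) atTop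
      (𝓝 ((d / (1 - c) : ℝ) : ℂ)) :=
    (Complex.continuous_ofReal.tendsto _).comp Breal
  have T3 : ∀ z : ℂ, Tendsto (fun k => g^[mk k] (f^[nk k] z)) atTop
      (𝓝 ((lam : ℂ) * z + ((d / (1 - c) : ℝ) : ℂ))) := by
    intro z
    apply Tendsto.congr (fun k => (hcomp k z).symm)
    exact (T1C.mul_const z).add BC
  -- T4 : accumulation point
  -- sequence of semigroup elements
  set S := Subsemigroup.closure ({f, g} : Set (Function.End ℂ)) with hS
  have hfS : f ∈ S := Subsemigroup.subset_closure (Set.mem_insert f {g})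
  have hgS : g ∈ S := Subsemigroup.subset_closure (Set.mem_insert_of_mem f rfl)
  have hfmem : ∀ n : ℕ, 1 ≤ n → (f^[n] : Function.End ℂ) ∈ S := by
    intro n hn1
    induction n with
    | zero => omega
    | succ n ih =>
      rcases Nat.eq_or_lt_of_le hn1 with h1 | h1
      · rw [← h1]; exact hfS
      · exact mul_mem (ih (by omega)) hfS
  have hgmem : ∀ n : ℕ, 1 ≤ n → (g^[n] : Function.End ℂ) ∈ S := by
    intro n hn1
    induction n with
    | zero => omega
    | succ n ih =>
      rcases Nat.eq_or_lt_of_le hn1 with h1 | h1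
      · rw [← h1]; exact hgS
      · exact mul_mem (ih (by omega)) hgS
  set h' : ℕ → Function.End ℂ := fun k => (g^[mk k] ∘ f^[nk k] : ℂ → ℂ) with hh'
  have hbase : ∀ k, h' k ∈ S := fun k => mul_mem (hgmem _ (hmk1 k)) (hfmem _ (hn k))
  set W : ℕ → Function.End ℂ := fun k => (h' k)^[k + 1] with hW
  have hWmem : ∀ k, W k ∈ S := by
    intro k
    have : ∀ j : ℕ, 1 ≤ j → ((h' k)^[j] : Function.End ℂ) ∈ S := by
      intro j hj1
      induction j with
      | zero => omega
      | succ j ih =>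
        rcases Nat.eq_or_lt_of_le hj1 with h1 | h1
        · rw [← h1]; exact hbase k
        · have hmem : (show Function.End ℂ from (h' k)^[j]) * h' k ∈ S :=
            mul_mem (ih (by omega)) (hbase k)
          exact hmem
    exact this (k + 1) (by omega)
  -- the basic affine data
  have hbase_eval : ∀ k (z : ℂ), h' k z =
      ((r k : ℝ) : ℂ) * z + ((d * (1 - c ^ (mk k)) / (1 - c) : ℝ) : ℂ) := by
    intro k z
    exact hcomp k z
  have hA1 : ∀ k, ((r k : ℝ) : ℂ) ≠ 1 := by
    intro k hcon
    exact hr1 k (by exact_mod_cast hcon)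
  have hWeval : ∀ k, W k Complex.I =
      ((r k : ℝ) : ℂ) ^ (k + 1) * Complex.I +
      ((d * (1 - c ^ (mk k)) / (1 - c) : ℝ) : ℂ) * (1 - ((r k : ℝ) : ℂ) ^ (k + 1)) /
        (1 - ((r k : ℝ) : ℂ)) := by
    intro k
    exact affine_iter _ _ (hA1 k) _ (hbase_eval k) (k + 1) Complex.I
  -- real sequences u, v
  set u : ℕ → ℝ := fun k => (r k) ^ (k + 1) with hu
  set v : ℕ → ℝ := fun k => (d * (1 - c ^ (mk k)) / (1 - c)) * (1 - u k) / (1 - r k) with hv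
  have hWeval' : ∀ k, W k Complex.I = ((u k : ℝ) : ℂ) * Complex.I + ((v k : ℝ) : ℂ) := by
    intro k
    rw [hWeval k]
    push_cast [hu, hv]
    ring
  -- u tends to 0
  have Tu : Tendsto u atTop (𝓝 0) := by
    set q : ℝ := (1 + lam) / 2 with hq
    have hq1 : q < 1 := by simp [hq]; linarith
    have hq0 : 0 ≤ q := by simp [hq]; linarith
    have hlq : lam < q := by simp [hq]; linarith
    have hev : ∀ᶠ k in atTop, r k < q := T1.eventually (eventually_lt_nhds hlq)
    apply squeeze_zero' (Eventually.of_forall (fun k => pow_nonneg (hr0 k).le _))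
      (hev.mono fun k hk => pow_le_pow_left₀ (hr0 k).le hk.le (k + 1))
    have hq' : Tendsto (fun k : ℕ => q ^ k) atTop (𝓝 0) :=
      tendsto_pow_atTop_nhds_zero_of_lt_one hq0 hq1
    have := hq'.const_mul q
    simpa [pow_succ, mul_comm] using this
  -- v tends to p
  set p : ℝ := d / ((1 - c) * (1 - lam)) with hp
  have hlamne : (1 : ℝ) - lam ≠ 0 := by linarith
  have Tv : Tendsto v atTop (𝓝 p) := by
    have h1 : Tendsto (fun k => (d * (1 - c ^ (mk k)) / (1 - c)) * (1 - u k)) atTop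
        (𝓝 ((d / (1 - c)) * (1 - 0))) := Breal.mul (tendsto_const_nhds.sub Tu)
    have h2 : Tendsto (fun k => 1 - r k) atTop (𝓝 (1 - lam)) := tendsto_const_nhds.sub T1
    have h3 := h1.div h2 hlamne
    have h4 : (d / (1 - c)) * (1 - 0) / (1 - lam) = p := by
      rw [hp, sub_zero, mul_one, div_div]
    rw [h4] at h3
    exact h3
  -- complex convergence of W k I to p
  have Tx : Tendsto (fun k => W k Complex.I) atTop (𝓝 ((p : ℝ) : ℂ)) := by
    apply Tendsto.congr (fun k => (hWeval' k).symm)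
    have hU : Tendsto (fun k => ((u k : ℝ) : ℂ)) atTop (𝓝 ((0 : ℝ) : ℂ)) :=
      (Complex.continuous_ofReal.tendsto _).comp Tu
    have hV : Tendsto (fun k => ((v k : ℝ) : ℂ)) atTop (𝓝 ((p : ℝ) : ℂ)) :=
      (Complex.continuous_ofReal.tendsto _).comp Tv
    have := (hU.mul_const Complex.I).add hV
    simpa using this
  -- W k I ≠ p
  have hne : ∀ k, W k Complex.I ≠ ((p : ℝ) : ℂ) := by
    intro k hcon
    rw [hWeval' k] at hcon
    have him := congrArg Complex.im hcon
    simp [Complex.mul_im] at him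
    have : 0 < u k := pow_pos (hr0 k) _
    rw [him] at this
    exact lt_irrefl 0 this
  refine ⟨mk, nk, T1, T2, T3, ?_⟩
  rw [Set.mem_setOf_eq, accPt_iff_nhds]
  intro U hU
  have hTc : Tendsto (fun k => ((W k Complex.I : ℂ) : OnePoint ℂ)) atTop
      (𝓝 (((p : ℝ) : ℂ) : OnePoint ℂ)) :=
    (OnePoint.continuous_coe.tendsto _).comp Tx
  have hev : ∀ᶠ k in atTop, ((W k Complex.I : ℂ) : OnePoint ℂ) ∈ U := hTc hU
  obtain ⟨k, hk⟩ := hev.exists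
  refine ⟨((W k Complex.I : ℂ) : OnePoint ℂ), ⟨hk, ⟨W k, hWmem k, rfl⟩⟩, ?_⟩
  intro hcon
  exact hne k (OnePoint.coe_injective hcon)
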